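/- For every x ∈ R/Z and every s with 0 < Re(s) < 1 (or by analytic continuation, all s where both sides are defined), the Hurwitz formula holds: ζ(x, 1-s) = Γ(s)/(2π)^s · (e^{-iπs/2} ζ̂(x,s) + e^{iπs/2} ζ̂(-x,s)). -/
import Mathlib

set_option autoImplicit false

open Complex Real HurwitzZeta

/-- Hurwitz's formula: for `x ∈ ℝ/ℤ` and `0 < Re s < 1`,
`ζ(x, 1-s) = Γ(s)/(2π)^s (e^{-iπs/2} ζ̂(x,s) + e^{iπs/2} ζ̂(-x,s))`. -/
theorem hurwitz_formula (x : ℝ) (s : ℂ) (hs0 : 0 < s.re) (hs1 : s.re < 1) :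
    hurwitzZeta (x : UnitAddCircle) (1 - s) =
      Complex.Gamma s / (2 * (π : ℂ)) ^ s *
        (Complex.exp (-I * π * s / 2) * expZeta (x : UnitAddCircle) s +
          Complex.exp (I * π * s / 2) * expZeta ((-x : ℝ) : UnitAddCircle) s) := by
  have hs : ∀ (n : ℕ), s ≠ -n := by
    intro n h
    rw [h] at hs0
    rw [neg_re, natCast_re] at hs0
    linarith [Nat.cast_nonneg (α := ℝ) n]
  rw [hurwitzZeta_one_sub (x : UnitAddCircle) hs (Or.inr (fun h => by simp [h] at hs1))]
  have h2 : ((-x : ℝ) : UnitAddCircle) = -(x : UnitAddCircle) := by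
    simp
  rw [h2, cpow_neg, show -(π : ℂ) * I * s / 2 = -I * π * s / 2 by ring,
    show (π : ℂ) * I * s / 2 = I * π * s / 2 by ring]
  ring
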